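/- Let E(φ) = Σ_{n≥0} e_{2n+1} cos((2n+1)φ) with e_1 > 0, e_{2n+1} ≤ 0 for all n ≥ 1, Σ_{n≥0} e_{2n+1} = 1, and Σ_{n≥0} (2n+1)² e_{2n+1} ≥ 0 (all series absolutely convergent). Then there exist coefficients p_{2m+1} ≥ 0 with Σ_{m≥0} p_{2m+1} = 1 such that cos φ = Σ_{m≥0} p_{2m+1} E((2m+1)φ) for all real φ. -/

import Mathlib

open Real

namespace CosDecomp

/-- Fibers of odd products: pairs `(i,j)` with `(2i+1)(2j+1) = 2N+1`. -/
def Fset (N : ℕ) : Finset (ℕ × ℕ) :=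
  (Finset.range (N+1) ×ˢ Finset.range (N+1)).filter
    (fun x => (2*x.1+1)*(2*x.2+1) = 2*N+1)

def Sset (N : ℕ) : Finset (ℕ × ℕ) := (Fset N).filter (fun x => 1 ≤ x.2)

lemma mem_Fset {N : ℕ} {x : ℕ × ℕ} :
    x ∈ Fset N ↔ (2*x.1+1)*(2*x.2+1) = 2*N+1 := by
  simp only [Fset, Finset.mem_filter, Finset.mem_product, Finset.mem_range]
  constructor
  · exact fun h => h.2
  · intro h
    have h1 : (2*x.1+1) * 1 ≤ (2*x.1+1)*(2*x.2+1) :=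
      Nat.mul_le_mul_left _ (by omega)
    have h2 : 1 * (2*x.2+1) ≤ (2*x.1+1)*(2*x.2+1) :=
      Nat.mul_le_mul_right _ (by omega)
    omega

lemma mem_Sset {N : ℕ} {x : ℕ × ℕ} :
    x ∈ Sset N ↔ (2*x.1+1)*(2*x.2+1) = 2*N+1 ∧ 1 ≤ x.2 := by
  simp [Sset, Finset.mem_filter, mem_Fset]

lemma Sset_fst_lt {N : ℕ} {x : ℕ × ℕ} (hx : x ∈ Sset N) : x.1 < N := by
  rcases mem_Sset.1 hx with ⟨h1, h2⟩
  have h3 : (2*x.1+1)*3 ≤ (2*x.1+1)*(2*x.2+1) := Nat.mul_le_mul_left _ (by omega)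
  omega

/-- The coefficients `p`, defined recursively as the convolution inverse of `e`
on odd integers. -/
noncomputable def pcoef (e : ℕ → ℝ) : ℕ → ℝ
  | 0 => 1 / e 0
  | (m+1) => (1 / e 0) *
      ∑ x ∈ (Sset (m+1)).attach, pcoef e x.1.1 * (-(e x.1.2))
decreasing_by exact Sset_fst_lt x.2

lemma pcoef_zero (e : ℕ → ℝ) : pcoef e 0 = 1 / e 0 := by rw [pcoef]

lemma pcoef_succ (e : ℕ → ℝ) (m : ℕ) :
    pcoef e (m+1) = (1 / e 0) * ∑ x ∈ Sset (m+1), pcoef e x.1 * (-(e x.2)) := by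
  rw [pcoef, ← Finset.sum_attach (Sset (m+1)) (fun x => pcoef e x.1 * (-(e x.2)))]

variable {e : ℕ → ℝ}

lemma pcoef_nonneg (he1 : 0 < e 0) (hneg : ∀ n : ℕ, 1 ≤ n → e n ≤ 0) :
    ∀ m, 0 ≤ pcoef e m := by
  intro m
  induction m using Nat.strong_induction_on with
  | _ m ih =>
    match m with
    | 0 => rw [pcoef_zero]; positivity
    | (k+1) =>
      rw [pcoef_succ]
      apply mul_nonneg (by positivity)
      apply Finset.sum_nonneg
      intro x hx
      rcases mem_Sset.1 hx with ⟨h1, h2⟩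
      exact mul_nonneg (ih x.1 (Sset_fst_lt hx)) (by simpa using hneg x.2 h2)

/-- `p` is the convolution inverse of `e` on odd integers. -/
lemma conv (he : e 0 ≠ 0) (N : ℕ) :
    ∑ x ∈ Fset N, pcoef e x.1 * e x.2 = if N = 0 then 1 else 0 := by
  match N with
  | 0 =>
    have hF : Fset 0 = {(0,0)} := by decide
    rw [hF]
    simp [pcoef_zero, he]
  | (m+1) =>
    rw [← Finset.sum_filter_add_sum_filter_not (Fset (m+1)) (fun x => 1 ≤ x.2)]
    have h2 : (Fset (m+1)).filter (fun x => ¬ 1 ≤ x.2) = {(m+1, 0)} := by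
      ext x
      simp only [Finset.mem_filter, mem_Fset, Finset.mem_singleton, not_le]
      constructor
      · rintro ⟨h1, h2⟩
        have hx2 : x.2 = 0 := by omega
        have : x.1 = m+1 := by rw [hx2] at h1; omega
        exact Prod.ext this hx2
      · rintro rfl; simp
    rw [h2]
    have hS : ((Fset (m+1)).filter (fun x => 1 ≤ x.2)) = Sset (m+1) := rfl
    rw [hS, Finset.sum_singleton]
    have := pcoef_succ e m
    have he0 : pcoef e (m+1) * e 0 = ∑ x ∈ Sset (m+1), pcoef e x.1 * (-(e x.2)) := by
      rw [this]; field_simp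
    simp only [if_neg (Nat.succ_ne_zero m)]
    rw [he0, ← Finset.sum_add_distrib]
    simp

/-- Partial sums of `p` are bounded by `1`. -/
lemma partial_sum_le (he1 : 0 < e 0) (hneg : ∀ n : ℕ, 1 ≤ n → e n ≤ 0)
    (hsume : Summable e) (hnorm : ∑' n : ℕ, e n = 1) (M : ℕ) :
    ∑ m ∈ Finset.range M, pcoef e m ≤ 1 := by
  set qq : ℕ → ℝ := fun j => (if j = 0 then e 0 else 0) - e j with hqqdef
  have hqq_nonneg : ∀ j, 0 ≤ qq j := by
    intro j
    rcases Nat.eq_zero_or_pos j with rfl | hj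
    · simp [hqqdef]
    · simp only [hqqdef, if_neg (Nat.pos_iff_ne_zero.1 hj)]
      have := hneg j hj
      linarith
  have hqq_sum : Summable qq :=
    ((hasSum_ite_eq 0 (e 0)).summable).sub hsume
  have hqq_tsum : ∑' j, qq j = e 0 - 1 := by
    rw [hqqdef]
    rw [Summable.tsum_sub ((hasSum_ite_eq 0 (e 0)).summable) hsume, hnorm,
      (hasSum_ite_eq 0 (e 0)).tsum_eq]
  match M with
  | 0 => simp
  | (K+1) =>
    set S := ∑ m ∈ Finset.range (K+1), pcoef e m with hSdef
    have hS0 : 0 ≤ S := Finset.sum_nonneg fun m _ => pcoef_nonneg he1 hneg m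
    have hmain : e 0 * S = 1 + ∑ i ∈ Finset.range K,
        ∑ x ∈ Sset (i+1), pcoef e x.1 * (-(e x.2)) := by
      rw [hSdef, Finset.mul_sum, Finset.sum_range_succ']
      have h0 : e 0 * pcoef e 0 = 1 := by
        rw [pcoef_zero]; field_simp
      rw [h0, add_comm]
      congr 1
      apply Finset.sum_congr rfl
      intro i _
      rw [pcoef_succ]
      field_simp
    set B := (Finset.range K).biUnion (fun i => Sset (i+1)) with hBdef
    have hdisj : ∀ i ∈ Finset.range K, ∀ j ∈ Finset.range K, i ≠ j →
        Disjoint (Sset (i+1)) (Sset (j+1)) := by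
      intro i _ j _ hij
      rw [Finset.disjoint_left]
      intro x hxi hxj
      rcases mem_Sset.1 hxi with ⟨h1, _⟩
      rcases mem_Sset.1 hxj with ⟨h2, _⟩
      omega
    have hsumB : ∑ i ∈ Finset.range K, ∑ x ∈ Sset (i+1), pcoef e x.1 * (-(e x.2))
        = ∑ x ∈ B, pcoef e x.1 * (-(e x.2)) :=
      (Finset.sum_biUnion hdisj).symm
    set Big := Finset.range (K+1) ×ˢ ((Finset.range (K+1)).filter (fun j => 1 ≤ j))
      with hBigdef
    have hsub : B ⊆ Big := by
      intro x hx
      rcases Finset.mem_biUnion.1 hx with ⟨i, hi, hxi⟩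
      rcases mem_Sset.1 hxi with ⟨h1, h2⟩
      have hiK : i < K := Finset.mem_range.1 hi
      have hx1 : x.1 < i + 1 := Sset_fst_lt hxi
      have hx2 : x.2 ≤ i + 1 := by
        have : 1 * (2*x.2+1) ≤ (2*x.1+1)*(2*x.2+1) := Nat.mul_le_mul_right _ (by omega)
        omega
      simp only [hBigdef, Finset.mem_product, Finset.mem_range, Finset.mem_filter]
      exact ⟨by omega, by omega, h2⟩
    have hle1 : ∑ x ∈ B, pcoef e x.1 * (-(e x.2)) ≤
        ∑ x ∈ Big, pcoef e x.1 * (-(e x.2)) := by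
      apply Finset.sum_le_sum_of_subset_of_nonneg hsub
      intro x hx _
      rcases Finset.mem_product.1 hx with ⟨_, hx2⟩
      rcases Finset.mem_filter.1 hx2 with ⟨_, h2⟩
      exact mul_nonneg (pcoef_nonneg he1 hneg x.1) (by simpa using hneg x.2 h2)
    have hBig : ∑ x ∈ Big, pcoef e x.1 * (-(e x.2)) =
        S * ∑ j ∈ (Finset.range (K+1)).filter (fun j => 1 ≤ j), (-(e j)) := by
      rw [hBigdef, Finset.sum_product, hSdef, Finset.sum_mul_sum]
    have hqle : ∑ j ∈ (Finset.range (K+1)).filter (fun j => 1 ≤ j), (-(e j)) ≤ e 0 - 1 := by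
      have hcongr : ∑ j ∈ (Finset.range (K+1)).filter (fun j => 1 ≤ j), (-(e j))
          = ∑ j ∈ (Finset.range (K+1)).filter (fun j => 1 ≤ j), qq j := by
        apply Finset.sum_congr rfl
        intro j hj
        rcases Finset.mem_filter.1 hj with ⟨_, h1⟩
        simp [hqqdef, Nat.pos_iff_ne_zero.1 h1]
      rw [hcongr, ← hqq_tsum]
      exact Summable.sum_le_tsum _ (fun i _ => hqq_nonneg i) hqq_sum
    have hfinal : e 0 * S ≤ 1 + S * (e 0 - 1) := by
      rw [hmain, hsumB]
      have h2 := mul_le_mul_of_nonneg_left hqle hS0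
      linarith [hle1, hBig.le, hBig.ge]
    nlinarith

lemma fiber_eq (N : ℕ) :
    (fun x : ℕ × ℕ => 2*x.1*x.2 + x.1 + x.2) ⁻¹' {N} = ↑(Fset N) := by
  ext x
  simp only [Set.mem_preimage, Set.mem_singleton_iff, Finset.mem_coe, mem_Fset]
  have h : (2*x.1+1)*(2*x.2+1) = 2*(2*x.1*x.2+x.1+x.2)+1 := by ring
  omega

/-- Grouping a double sum by the value of the odd product. -/
lemma tsum_fiber (f : ℕ × ℕ → ℝ) (hf : Summable f) :
    ∑' x : ℕ × ℕ, f x = ∑' N : ℕ, ∑ x ∈ Fset N, f x := by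
  have h := hf.hasSum.tsum_fiberwise (fun x : ℕ × ℕ => 2*x.1*x.2 + x.1 + x.2)
  rw [← h.tsum_eq]
  apply tsum_congr
  intro N
  rw [show (fun x : ℕ × ℕ => 2*x.1*x.2 + x.1 + x.2) ⁻¹' {N} = ↑(Fset N) from fiber_eq N]
  exact Finset.tsum_subtype' _ _

end CosDecomp

open CosDecomp in
/-- Lemma 1: if `E(φ) = Σ_{n≥0} e_{2n+1} cos((2n+1)φ)` with `e₁ > 0`, `e_{2n+1} ≤ 0` for
`n ≥ 1`, `Σ e_{2n+1} = 1` and `Σ (2n+1)² e_{2n+1} ≥ 0` (all series absolutely convergent),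
then `cos φ = Σ_{m≥0} p_{2m+1} E((2m+1)φ)` for some probabilities `p_{2m+1} ≥ 0`
summing to `1`. -/
theorem cosine_decomposition (e : ℕ → ℝ)
    (habs : Summable fun n : ℕ => (2 * (n : ℝ) + 1) ^ 2 * |e n|)
    (he1 : 0 < e 0)
    (hneg : ∀ n : ℕ, 1 ≤ n → e n ≤ 0)
    (hnorm : ∑' n : ℕ, e n = 1)
    (hE'' : 0 ≤ ∑' n : ℕ, (2 * (n : ℝ) + 1) ^ 2 * e n) :
    ∃ p : ℕ → ℝ, (∀ m : ℕ, 0 ≤ p m) ∧ Summable p ∧ (∑' m : ℕ, p m = 1) ∧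
      ∀ φ : ℝ,
        ∑' m : ℕ, p m * ∑' n : ℕ, e n * Real.cos ((2 * (n : ℝ) + 1) * ((2 * (m : ℝ) + 1) * φ))
          = Real.cos φ := by
  classical
  have habse : Summable (fun n => |e n|) := by
    apply Summable.of_nonneg_of_le (fun n => abs_nonneg _) (fun n => ?_) habs
    have h1 : (1:ℝ) ≤ (2*(n:ℝ)+1)^2 := by
      have : (0:ℝ) ≤ (n:ℝ) := Nat.cast_nonneg n
      nlinarith
    nlinarith [abs_nonneg (e n)]
  have hsume : Summable e := Summable.of_abs habse
  set p := pcoef e with hp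
  have hp0 : ∀ m, 0 ≤ p m := pcoef_nonneg he1 hneg
  have hpsum : Summable p := summable_of_sum_range_le hp0 (partial_sum_le he1 hneg hsume hnorm)
  have he0 : e 0 ≠ 0 := ne_of_gt he1
  have hnp : Summable (fun m => ‖p m‖) := by
    simpa [Real.norm_eq_abs, abs_of_nonneg (hp0 _)] using hpsum
  have hne : Summable (fun n => ‖e n‖) := by
    simpa [Real.norm_eq_abs] using habse
  have hprod : Summable (fun x : ℕ × ℕ => p x.1 * e x.2) :=
    summable_mul_of_summable_norm hnp hne
  have htsum1 : ∑' x : ℕ × ℕ, p x.1 * e x.2 = (∑' m, p m) * (∑' n, e n) :=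
    (tsum_mul_tsum_of_summable_norm hnp hne).symm
  have hconvsum : ∑' x : ℕ × ℕ, p x.1 * e x.2 = 1 := by
    rw [tsum_fiber _ hprod]
    calc ∑' N : ℕ, ∑ x ∈ Fset N, p x.1 * e x.2
        = ∑' N : ℕ, (if N = 0 then (1:ℝ) else 0) := tsum_congr (fun N => conv he0 N)
      _ = 1 := tsum_ite_eq 0 1
  have hptsum : ∑' m, p m = 1 := by
    have h := htsum1.symm.trans hconvsum
    rwa [hnorm, mul_one] at h
  refine ⟨p, hp0, hpsum, hptsum, ?_⟩
  intro φ
  set f : ℕ × ℕ → ℝ := fun x =>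
    p x.1 * (e x.2 * Real.cos ((2*(x.2:ℝ)+1) * ((2*(x.1:ℝ)+1) * φ))) with hfdef
  have hfsummable : Summable f := by
    apply Summable.of_norm_bounded (g := fun x : ℕ × ℕ => |p x.1 * e x.2|) hprod.abs
    intro x
    rw [Real.norm_eq_abs, hfdef]
    simp only [abs_mul]
    have h1 := Real.abs_cos_le_one ((2*(x.2:ℝ)+1) * ((2*(x.1:ℝ)+1) * φ))
    have h2 : (0:ℝ) ≤ |p x.1| := abs_nonneg _
    have h3 : (0:ℝ) ≤ |e x.2| := abs_nonneg _
    exact mul_le_mul_of_nonneg_left (mul_le_of_le_one_right h3 h1) h2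
  calc
    ∑' m, p m * ∑' n, e n * Real.cos ((2*(n:ℝ)+1) * ((2*(m:ℝ)+1) * φ))
        = ∑' m, ∑' n, f (m, n) := tsum_congr (fun m => (tsum_mul_left).symm)
    _ = ∑' x : ℕ × ℕ, f x := (Summable.tsum_prod' hfsummable hfsummable.prod_factor).symm
    _ = ∑' N : ℕ, ∑ x ∈ Fset N, f x := tsum_fiber f hfsummable
    _ = ∑' N : ℕ, (if N = 0 then (1:ℝ) else 0) * Real.cos ((2*(N:ℝ)+1) * φ) := by
        apply tsum_congr
        intro N
        rw [← conv he0 N, Finset.sum_mul]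
        apply Finset.sum_congr rfl
        intro x hx
        have hN := mem_Fset.1 hx
        have hNr : ((2*(x.1:ℝ)+1) * (2*(x.2:ℝ)+1)) = 2*(N:ℝ)+1 := by
          have := congrArg (fun k : ℕ => (k:ℝ)) hN
          push_cast at this
          linarith
        have harg : ((2*(x.2:ℝ)+1) * ((2*(x.1:ℝ)+1) * φ)) = (2*(N:ℝ)+1) * φ := by
          rw [← hNr]; ring
        rw [hfdef]
        simp only
        rw [harg]
        ring
    _ = ∑' N : ℕ, (if N = 0 then Real.cos φ else 0) := by
        apply tsum_congr
        intro N
        split_ifs with h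
        · subst h; norm_num
        · simp
    _ = Real.cos φ := tsum_ite_eq 0 _
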